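/- For every killing rate κ > 0 and every integer N ≥ 1, the partial sum of the Green's function series satisfies Σ_{n=0}^{N−1} (4+κ)^{−2n} W_{2n}^{o,o} ≥ 1 + (log N)/π − Nκ/π − 1/(3π). -/

import Mathlib

open scoped Real

/-- Graph (L¹) distance of `x ∈ ℤ²` from the origin: `|x₁| + |x₂|`. -/
def gnorm (x : ℤ × ℤ) : ℕ := x.1.natAbs + x.2.natAbs

/-- `W n x` is the number of nearest-neighbour walks of length `n` in `ℤ²`
from the origin `o = (0,0)` to `x`, i.e. the number of sequences
`(v₀, …, v_n)` with `v₀ = o`, `v_n = x` and `|v_{i+1} − v_i| = 1` for all `i`. -/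
noncomputable def W (n : ℕ) (x : ℤ × ℤ) : ℕ :=
  Set.ncard {v : Fin (n + 1) → ℤ × ℤ |
    v 0 = (0, 0) ∧ v (Fin.last n) = x ∧
    ∀ i : Fin n, gnorm (v i.succ - v i.castSucc) = 1}

/-- The Green's function `G^{o,x}` of the simple random walk on `ℤ²` with
killing rate `κ`: `G κ x = Σ_{n≥0} (4+κ)^{-n} W_n^{o,x}`. -/
noncomputable def G (κ : ℝ) (x : ℤ × ℤ) : ℝ :=
  ∑' n : ℕ, (1 / (4 + κ)) ^ n * (W n x : ℝ)

lemma centralBinom_sq_ge (n : ℕ) :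
    (16:ℝ)^n * 2 / (Real.pi * (2*n+1)) ≤ ((Nat.centralBinom n : ℝ))^2 := by
  have hfacn : Nat.centralBinom n * Nat.factorial n * Nat.factorial n
      = Nat.factorial (2*n) := by
    have := Nat.choose_mul_factorial_mul_factorial (by omega : n ≤ 2*n)
    simpa [Nat.centralBinom, two_mul, Nat.sub_self] using this
  have hfac : (Nat.centralBinom n : ℝ) * (Nat.factorial n) * (Nat.factorial n)
      = Nat.factorial (2*n) := by exact_mod_cast congrArg (Nat.cast (R := ℝ)) hfacn
  have hW := Real.Wallis.W_le n
  rw [Real.Wallis.W_eq_factorial_ratio] at hW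
  have hfpos : (0:ℝ) < Nat.factorial n := by exact_mod_cast Nat.factorial_pos n
  have hdpos : (0:ℝ) < 2*(n:ℝ)+1 := by positivity
  have hpi : (0:ℝ) < Real.pi := Real.pi_pos
  have h16 : (2:ℝ)^(4*n) = 16^n := by rw [pow_mul]; norm_num
  -- from hW : 2^(4n) n!^4 / ((2n)!^2 (2n+1)) ≤ π/2
  rw [div_le_iff₀ (by positivity)] at hW
  rw [div_le_iff₀ (by positivity)]
  have key : ((Nat.factorial (2*n) : ℝ))^2 = (Nat.centralBinom n : ℝ)^2 * (Nat.factorial n)^4 := by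
    rw [← hfac]; ring
  rw [key] at hW
  nlinarith [sq_nonneg ((Nat.centralBinom n : ℝ)), pow_pos hfpos 4, hW, h16]

lemma log_cubic {x : ℝ} (hx : 0 ≤ x) : Real.log (1+x) ≤ x - x^2/2 + x^3/3 := by
  have key : ∀ y ∈ Set.Ici (0:ℝ), HasDerivAt (fun t => t - t^2/2 + t^3/3 - Real.log (1+t))
      (1 - y + y^2 - 1/(1+y)) y := by
    intro y hy
    have h1 : (0:ℝ) < 1 + y := by simp at hy; linarith
    have hlog : HasDerivAt (fun t : ℝ => Real.log (1+t)) (1/(1+y)) y := by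
      have := (Real.hasDerivAt_log (ne_of_gt h1)).comp y
        ((hasDerivAt_id y).const_add 1)
      simpa [one_div, Function.comp_def] using this
    have hpoly : HasDerivAt (fun t : ℝ => t - t^2/2 + t^3/3) (1 - y + y^2) y := by
      have h := (((hasDerivAt_id y).sub ((hasDerivAt_pow 2 y).div_const 2)).add
        ((hasDerivAt_pow 3 y).div_const 3))
      exact h.congr_deriv (by norm_num)
    exact hpoly.sub hlog
  have hmono : MonotoneOn (fun t : ℝ => t - t^2/2 + t^3/3 - Real.log (1+t)) (Set.Ici 0) := by
    apply monotoneOn_of_deriv_nonneg (convex_Ici 0)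
    · apply ContinuousOn.sub (by fun_prop)
      apply Real.continuousOn_log.comp (by fun_prop)
      intro y hy; simp at hy ⊢; intro h; linarith
    · intro y hy
      rw [interior_Ici] at hy
      exact (key y (le_of_lt (show (0:ℝ) < y from hy))).differentiableAt.differentiableWithinAt
    · intro y hy
      rw [interior_Ici] at hy
      rw [(key y (le_of_lt (show (0:ℝ) < y from hy))).deriv]
      have h1 : (0:ℝ) < 1 + y := by simp at hy; linarith
      have : 1 - y + y^2 - 1/(1+y) = y^3/(1+y) := by field_simp; ring
      rw [this]
      have : (0:ℝ) < y := hy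
      positivity
  have h0 := hmono (Set.self_mem_Ici) (by exact hx : x ∈ Set.Ici 0) hx
  simp at h0
  linarith


lemma harmonic_half (N : ℕ) (hN : 1 ≤ N) :
    Real.log N - 1/3 + 1/(3*N) ≤ ∑ n ∈ Finset.Ico 1 N, 2/(2*(n:ℝ)+1) := by
  induction N, hN using Nat.le_induction with
  | base => simp
  | succ N hN ih =>
    rw [Finset.sum_Ico_succ_top hN]
    have hNpos : (0:ℝ) < N := by exact_mod_cast hN
    have hN1 : (1:ℝ) ≤ N := by exact_mod_cast hN
    have hlog : Real.log (N+1) - Real.log N ≤ 2/(2*N+1) + 1/(3*(N:ℝ)) - 1/(3*((N:ℝ)+1)) := by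
      have h1 : Real.log ((N:ℝ)+1) - Real.log N = Real.log (1 + 1/N) := by
        rw [← Real.log_div (by positivity) (ne_of_gt hNpos)]
        congr 1; field_simp
      rw [h1]
      refine (log_cubic (x := 1/(N:ℝ)) (by positivity)).trans ?_
      set t := (N:ℝ)
      have hpos : (0:ℝ) < 6*t^3*(2*t+1)*(t+1) := by positivity
      rw [← mul_le_mul_iff_of_pos_right hpos]
      have e1 : (1/t - (1/t)^2/2 + (1/t)^3/3) * (6*t^3*(2*t+1)*(t+1))
          = (6*t^2 - 3*t + 2) * ((2*t+1)*(t+1)) := by field_simp; ring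
      have e2 : (2/(2*t+1) + 1/(3*t) - 1/(3*(t+1))) * (6*t^3*(2*t+1)*(t+1))
          = 12*t^3*(t+1) + 2*t^2*(2*t+1)*(t+1) - 2*t^2*(2*t+1)*t := by field_simp; ring
      rw [e1, e2]
      nlinarith [mul_nonneg (sub_nonneg.mpr hN1) (by positivity : (0:ℝ) ≤ 4*t^2+5*t+2)]
    push_cast
    push_cast at ih hlog
    linarith

def stepOf : Bool → Bool → ℤ × ℤ
  | true, true => (1, 0)
  | false, false => (-1, 0)
  | true, false => (0, 1)
  | false, true => (0, -1)

lemma gnorm_stepOf (a b : Bool) : gnorm (stepOf a b) = 1 := by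
  cases a <;> cases b <;> rfl

lemma stepOf_inj {a b a' b' : Bool} (h : stepOf a b = stepOf a' b') : a = a' ∧ b = b' := by
  revert h; cases a <;> cases b <;> cases a' <;> cases b' <;> decide

lemma stepOf_fst_add_snd (a b : Bool) :
    (stepOf a b).1 + (stepOf a b).2 = if a then 1 else -1 := by
  cases a <;> cases b <;> rfl

lemma stepOf_fst_sub_snd (a b : Bool) :
    (stepOf a b).1 - (stepOf a b).2 = if b then 1 else -1 := by
  cases a <;> cases b <;> rfl

def gstep (m : ℕ) (A B : Finset (Fin m)) (j : ℕ) : ℤ × ℤ :=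
  if h : j < m then stepOf (decide ((⟨j, h⟩ : Fin m) ∈ A)) (decide ((⟨j, h⟩ : Fin m) ∈ B)) else 0

def gwalk (m : ℕ) (A B : Finset (Fin m)) : Fin (m+1) → ℤ × ℤ :=
  fun i => ∑ j ∈ Finset.range i.val, gstep m A B j

lemma gwalk_zero (m : ℕ) (A B : Finset (Fin m)) : gwalk m A B 0 = (0, 0) := by
  simp [gwalk, Prod.mk_zero_zero]

lemma gwalk_step (m : ℕ) (A B : Finset (Fin m)) (i : Fin m) :
    gwalk m A B i.succ - gwalk m A B i.castSucc
      = stepOf (decide (i ∈ A)) (decide (i ∈ B)) := by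
  simp only [gwalk, Fin.val_succ, Fin.coe_castSucc, Finset.sum_range_succ]
  simp [gstep, i.isLt]

lemma sum_if_mem (m : ℕ) (A : Finset (Fin m)) :
    ∑ j : Fin m, (if j ∈ A then (1:ℤ) else -1) = 2 * A.card - m := by
  have : ∀ j : Fin m, (if j ∈ A then (1:ℤ) else -1) = (if j ∈ A then (2:ℤ) else 0) - 1 := by
    intro j; split <;> ring
  rw [Finset.sum_congr rfl fun j _ => this j, Finset.sum_sub_distrib,
    Finset.sum_ite_mem, Finset.univ_inter, Finset.sum_const, Finset.sum_const,
    Finset.card_univ, Fintype.card_fin]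
  push_cast; ring

lemma gwalk_last (n : ℕ) (A B : Finset (Fin (2*n))) (hA : A.card = n) (hB : B.card = n) :
    gwalk (2*n) A B (Fin.last (2*n)) = (0, 0) := by
  have hsum : gwalk (2*n) A B (Fin.last (2*n))
      = ∑ j : Fin (2*n), stepOf (decide (j ∈ A)) (decide (j ∈ B)) := by
    rw [gwalk, Fin.val_last, ← Fin.sum_univ_eq_sum_range]
    refine Finset.sum_congr rfl fun j _ => ?_
    simp [gstep, j.isLt]
  rw [hsum]
  set S := ∑ j : Fin (2*n), stepOf (decide (j ∈ A)) (decide (j ∈ B)) with hS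
  have h1 : S.1 + S.2 = 0 := by
    rw [hS, Prod.fst_sum, Prod.snd_sum, ← Finset.sum_add_distrib]
    simp_rw [stepOf_fst_add_snd, decide_eq_true_eq]
    rw [sum_if_mem, hA]; push_cast; ring
  have h2 : S.1 - S.2 = 0 := by
    rw [hS, Prod.fst_sum, Prod.snd_sum, ← Finset.sum_sub_distrib]
    simp_rw [stepOf_fst_sub_snd, decide_eq_true_eq]
    rw [sum_if_mem, hB]; push_cast; ring
  have : S.1 = 0 ∧ S.2 = 0 := by omega
  exact Prod.ext this.1 this.2

lemma gwalk_inj (m : ℕ) {A B A' B' : Finset (Fin m)}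
    (h : gwalk m A B = gwalk m A' B') : A = A' ∧ B = B' := by
  have hstep : ∀ i : Fin m, stepOf (decide (i ∈ A)) (decide (i ∈ B))
      = stepOf (decide (i ∈ A')) (decide (i ∈ B')) := by
    intro i
    rw [← gwalk_step m A B i, ← gwalk_step m A' B' i, h]
  constructor <;> [skip; skip] <;>
  · ext i
    have := stepOf_inj (hstep i)
    constructor <;> intro hi <;>
    · first
      | (have h1 : decide (i ∈ A) = decide (i ∈ A') := this.1
         simp only [decide_eq_decide] at h1
         first | exact h1.mp hi | exact h1.mpr hi)
      | (have h2 : decide (i ∈ B) = decide (i ∈ B') := this.2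
         simp only [decide_eq_decide] at h2
         first | exact h2.mp hi | exact h2.mpr hi)

lemma gnorm_add_le (x y : ℤ × ℤ) : gnorm (x + y) ≤ gnorm x + gnorm y := by
  simp only [gnorm, Prod.fst_add, Prod.snd_add]
  have := Int.natAbs_add_le x.1 y.1
  have := Int.natAbs_add_le x.2 y.2
  omega

-- the walk set is finite
lemma walkset_finite (m : ℕ) (x : ℤ × ℤ) :
    {v : Fin (m + 1) → ℤ × ℤ |
      v 0 = (0, 0) ∧ v (Fin.last m) = x ∧
      ∀ i : Fin m, gnorm (v i.succ - v i.castSucc) = 1}.Finite := by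
  set K : Set (ℤ × ℤ) := ↑((Finset.Icc (-(m:ℤ)) m) ×ˢ (Finset.Icc (-(m:ℤ)) m)) with hK
  have hKfin : K.Finite := (Finset.Icc (-(m:ℤ)) m ×ˢ Finset.Icc (-(m:ℤ)) m).finite_toSet
  refine Set.Finite.subset (Set.Finite.pi (fun _ : Fin (m+1) => hKfin)) ?_
  intro v hv
  obtain ⟨h0, -, hstep⟩ := hv
  have bound : ∀ k : ℕ, ∀ hk : k < m + 1, gnorm (v ⟨k, hk⟩) ≤ k := by
    intro k
    induction k with
    | zero => intro hk; simp only [Fin.mk_zero, h0]; simp [gnorm]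
    | succ k ih =>
      intro hk
      have hk' : k < m + 1 := by omega
      have hkm : k < m := by omega
      have hst := hstep ⟨k, hkm⟩
      have hsucc : (⟨k, hkm⟩ : Fin m).succ = ⟨k+1, hk⟩ := rfl
      have hcast : (⟨k, hkm⟩ : Fin m).castSucc = ⟨k, hk'⟩ := rfl
      rw [hsucc, hcast] at hst
      have : v ⟨k+1, hk⟩ = v ⟨k, hk'⟩ + (v ⟨k+1, hk⟩ - v ⟨k, hk'⟩) := by ring
      rw [this]
      calc gnorm _ ≤ gnorm (v ⟨k, hk'⟩) + gnorm (v ⟨k+1, hk⟩ - v ⟨k, hk'⟩) := gnorm_add_le _ _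
    _ ≤ k + 1 := by rw [hst]; exact Nat.add_le_add_right (ih hk') 1
  intro i _
  have := bound i.val i.isLt
  simp only [Fin.eta] at this
  simp only [hK, Finset.coe_product, Set.mem_prod, Finset.mem_coe, Finset.mem_Icc]
  unfold gnorm at this
  have h1 := i.isLt
  omega

lemma W_lower (n : ℕ) : (Nat.centralBinom n)^2 ≤ W (2*n) (0, 0) := by
  classical
  set m := 2*n with hm
  set S : Set (Fin (m + 1) → ℤ × ℤ) := {v |
      v 0 = (0, 0) ∧ v (Fin.last m) = (0,0) ∧
      ∀ i : Fin m, gnorm (v i.succ - v i.castSucc) = 1} with hSdef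
  set D : Finset (Finset (Fin m) × Finset (Fin m)) :=
    (Finset.powersetCard n Finset.univ) ×ˢ (Finset.powersetCard n Finset.univ) with hD
  have hf : ∀ p ∈ (↑D : Set (Finset (Fin m) × Finset (Fin m))),
      gwalk m p.1 p.2 ∈ S := by
    rintro ⟨A, B⟩ hp
    simp only [hD, Finset.coe_product, Set.mem_prod, Finset.mem_coe,
      Finset.mem_powersetCard_univ] at hp
    refine ⟨gwalk_zero m A B, ?_, ?_⟩
    · exact gwalk_last n A B hp.1 hp.2
    · intro i; rw [gwalk_step]; exact gnorm_stepOf _ _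
  have hinj : Set.InjOn (fun p : Finset (Fin m) × Finset (Fin m) => gwalk m p.1 p.2)
      (↑D : Set _) := by
    rintro ⟨A, B⟩ - ⟨A', B'⟩ - h
    have := gwalk_inj m h
    exact Prod.ext this.1 this.2
  have hcard := Set.ncard_le_ncard_of_injOn _ hf hinj (walkset_finite m (0,0))
  rw [Set.ncard_coe_finset, hD, Finset.card_product, Finset.card_powersetCard,
    Finset.card_univ, Fintype.card_fin] at hcard
  calc Nat.centralBinom n ^ 2 = m.choose n * m.choose n := by
        rw [Nat.centralBinom, hm]; ring
    _ ≤ S.ncard := hcard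
    _ = W m (0,0) := rfl

/-- Lemma 3.2, eq. (3.5): lower bound on partial sums of the Green's function series. -/
theorem stmt1 (κ : ℝ) (hκ : 0 < κ) (N : ℕ) (hN : 1 ≤ N) :
    1 + Real.log N / π - N * κ / π - 1 / (3 * π)
      ≤ ∑ n ∈ Finset.range N, (1 / (4 + κ)) ^ (2 * n) * (W (2 * n) (0, 0) : ℝ) := by
  have hπ : (0:ℝ) < π := Real.pi_pos
  have h4κ : (0:ℝ) < 4 + κ := by linarith
  set h : ℕ → ℝ := fun n => if n = 0 then 1 else (2/(2*(n:ℝ)+1))/π - κ/(2*π) with hh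
  have hterm : ∀ n ∈ Finset.range N, h n ≤ (1 / (4 + κ)) ^ (2 * n) * (W (2 * n) (0, 0) : ℝ) := by
    intro n _
    rcases eq_or_ne n 0 with rfl | hn
    · have : (1:ℕ) ≤ W (2*0) (0,0) := by simpa using W_lower 0
      simp only [hh, if_pos rfl, mul_zero, pow_zero, one_mul]
      exact_mod_cast (by simpa using this : (1:ℕ) ≤ W 0 (0,0))
    · rw [hh]; simp only [if_neg hn]
      have hnn : (1:ℝ) ≤ n := by exact_mod_cast Nat.one_le_iff_ne_zero.mpr hn
      have step1 : ((Nat.centralBinom n : ℝ))^2 ≤ (W (2*n) (0,0) : ℝ) := by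
        exact_mod_cast W_lower n
      have step2 : (16:ℝ)^n * 2 / (π * (2*n+1)) * (1/(4+κ))^(2*n)
          ≤ (1 / (4 + κ)) ^ (2 * n) * (W (2 * n) (0, 0) : ℝ) := by
        rw [mul_comm]
        apply mul_le_mul_of_nonneg_left ((centralBinom_sq_ge n).trans step1) (by positivity)
      refine le_trans ?_ step2
      have hr : (16:ℝ)^n * (1/(4+κ))^(2*n) = (1 - κ/(4+κ))^(2*n) := by
        have h1 : (1:ℝ) - κ/(4+κ) = 4/(4+κ) := by field_simp; ring
        have h2 : (16:ℝ) * (1/(4+κ))^2 = (4/(4+κ))^2 := by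
          field_simp; ring
        rw [h1, pow_mul, pow_mul, ← mul_pow, h2]
      have hx1 : κ/(4+κ) ≤ 1 := by rw [div_le_one h4κ]; linarith
      have hx2 : κ/(4+κ) ≤ κ/4 :=
        div_le_div_of_nonneg_left hκ.le (by norm_num) (by linarith)
      have hbern : 1 - (n:ℝ)*κ/2 ≤ (1 - κ/(4+κ))^(2*n) := by
        have hb := one_add_mul_le_pow (a := -(κ/(4+κ))) (by linarith) (2*n)
        have h3 : 1 - (n:ℝ)*κ/2 ≤ 1 + ((2*n : ℕ):ℝ) * (-(κ/(4+κ))) := by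
          push_cast
          nlinarith [mul_le_mul_of_nonneg_left hx2 (show (0:ℝ) ≤ n by positivity)]
        refine h3.trans ?_
        simpa [sub_eq_add_neg] using hb
      calc (2/(2*(n:ℝ)+1))/π - κ/(2*π)
          ≤ (1 - (n:ℝ)*κ/2) * (2 / (π * (2*n+1))) := by
            have hd : (0:ℝ) < 2*(n:ℝ)+1 := by positivity
            have key : (1 - (n:ℝ)*κ/2) * (2/(π*(2*(n:ℝ)+1)))
                - ((2/(2*(n:ℝ)+1))/π - κ/(2*π)) = κ/(2*π*(2*(n:ℝ)+1)) := by
              field_simp; ring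
            have : (0:ℝ) ≤ κ/(2*π*(2*(n:ℝ)+1)) := by positivity
            linarith
        _ ≤ (1 - κ/(4+κ))^(2*n) * (2 / (π * (2*n+1))) :=
            mul_le_mul_of_nonneg_right hbern (by positivity)
        _ = (16:ℝ)^n * (1/(4+κ))^(2*n) * (2 / (π * (2*n+1))) := by rw [hr]
        _ = (16:ℝ)^n * 2 / (π * (2*n+1)) * (1/(4+κ))^(2*n) := by ring
  refine le_trans ?_ (Finset.sum_le_sum hterm)
  have hconst : ∑ _n ∈ Finset.Ico 1 N, (κ/(2*π)) = ((N:ℝ)-1)*κ/(2*π) := by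
    rw [Finset.sum_const, Nat.card_Ico, nsmul_eq_mul, Nat.cast_sub hN]
    push_cast; ring
  have hsplit : ∑ n ∈ Finset.range N, h n
      = 1 + (∑ n ∈ Finset.Ico 1 N, 2/(2*(n:ℝ)+1))/π - ((N:ℝ)-1)*κ/(2*π) := by
    rw [Finset.range_eq_Ico, ← Finset.sum_Ico_consecutive _ (Nat.zero_le 1) hN]
    have h0 : ∑ n ∈ Finset.Ico 0 1, h n = 1 := by simp [hh]
    have h1 : ∑ n ∈ Finset.Ico 1 N, h n
        = (∑ n ∈ Finset.Ico 1 N, 2/(2*(n:ℝ)+1))/π - ((N:ℝ)-1)*κ/(2*π) := by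
      rw [Finset.sum_div, ← hconst, ← Finset.sum_sub_distrib]
      refine Finset.sum_congr rfl fun n hn => ?_
      have hn0 : n ≠ 0 := by simp only [Finset.mem_Ico] at hn; omega
      simp [hh, hn0]
    rw [h0, h1]; ring
  rw [hsplit]
  have hH := harmonic_half N hN
  have hNpos : (0:ℝ) < N := by exact_mod_cast hN
  have h3N : (0:ℝ) ≤ 1/(3*(N:ℝ)) := by positivity
  have hA : (Real.log N - 1/3)/π ≤ (∑ n ∈ Finset.Ico 1 N, 2/(2*(n:ℝ)+1))/π := by
    gcongr; linarith
  have hB : ((N:ℝ)-1)*κ/(2*π) ≤ (N:ℝ)*κ/π := by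
    rw [div_le_div_iff₀ (by positivity) hπ]
    nlinarith [mul_pos hκ hπ, mul_pos (mul_pos hNpos hκ) hπ]
  have hid : (Real.log N - 1/3)/π = Real.log N/π - 1/(3*π) := by ring
  linarith
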